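/- Let R be an exchange ring (an associative unital ring such that for every x in R there exists an idempotent e in xR with 1-e in (1-x)R). Then for any positive integer m and elements x_1, ..., x_m in R with x_1 + ... + x_m = 1, there exist pairwise orthogonal idempotents e_1, ..., e_m in R with e_i in x_i R for each i and e_1 + ... + e_m = 1. -/

import Mathlib

open Matrix

/-- An exchange ring: for every `x` there is an idempotent `e ∈ xR` with `1 - e ∈ (1-x)R`. -/
def IsExchangeRing (R : Type*) [Ring R] : Prop :=
  ∀ x : R, ∃ e r s : R, e * e = e ∧ e = x * r ∧ 1 - e = (1 - x) * s

/-- The elementary transvection `t_{ij}(x) = e + x e^{ij}` as an element of `GL n R`. -/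
def transv {n : ℕ} {R : Type*} [Ring R] (i j : Fin n) (hij : i ≠ j) (x : R) :
    (Matrix (Fin n) (Fin n) R)ˣ :=
  ⟨1 + Matrix.single i j x, 1 + Matrix.single i j (-x),
    by
      have h0 : Matrix.single i j x * Matrix.single i j (-x) = 0 :=
        Matrix.single_mul_single_of_ne _ _ _ _ hij.symm _
      have h1 : Matrix.single i j (-x) * Matrix.single i j x = 0 :=
        Matrix.single_mul_single_of_ne _ _ _ _ hij.symm _
      simp [mul_add, add_mul, h0, h1, ← Matrix.single_add, add_assoc],
    by
      have h0 : Matrix.single i j x * Matrix.single i j (-x) = 0 :=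
        Matrix.single_mul_single_of_ne _ _ _ _ hij.symm _
      have h1 : Matrix.single i j (-x) * Matrix.single i j x = 0 :=
        Matrix.single_mul_single_of_ne _ _ _ _ hij.symm _
      simp [mul_add, add_mul, h0, h1, ← Matrix.single_add, add_assoc]⟩

/-- The elementary subgroup `E_n(R)` of `GL_n(R)`. -/
def elemGroup (n : ℕ) (R : Type*) [Ring R] : Subgroup ((Matrix (Fin n) (Fin n) R)ˣ) :=
  Subgroup.closure { g | ∃ i j : Fin n, ∃ hij : i ≠ j, ∃ x : R, g = transv i j hij x }

/-- The preelementary subgroup `E_n(I)` of level a two-sided ideal `I`. -/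
def preElem (n : ℕ) (R : Type*) [Ring R] (I : TwoSidedIdeal R) : Subgroup ((Matrix (Fin n) (Fin n) R)ˣ) :=
  Subgroup.closure { g | ∃ i j : Fin n, ∃ hij : i ≠ j, ∃ x ∈ I, g = transv i j hij x }

/-- The relative elementary subgroup `E_n(R,I)`: the normal closure of `E_n(I)` in `E_n(R)`. -/
def relElem (n : ℕ) (R : Type*) [Ring R] (I : TwoSidedIdeal R) : Subgroup ((Matrix (Fin n) (Fin n) R)ˣ) :=
  Subgroup.closure { g | ∃ τ ∈ elemGroup n R, ∃ ε ∈ preElem n R I, g = τ⁻¹ * ε * τ }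

/-- The full congruence subgroup `C_n(R,I)`: preimage of the center of `GL_n(R/I)`. -/
def congrSubgroup (n : ℕ) (R : Type*) [Ring R] (I : TwoSidedIdeal R) :
    Subgroup ((Matrix (Fin n) (Fin n) R)ˣ) :=
  Subgroup.comap
    (Units.map ((RingHom.mapMatrix (RingCon.mk' I.ringCon)).toMonoidHom :
      Matrix (Fin n) (Fin n) R →* Matrix (Fin n) (Fin n) I.ringCon.Quotient))
    (Subgroup.center ((Matrix (Fin n) (Fin n) I.ringCon.Quotient)ˣ))

/-- `x` is a product of `m` `H`-conjugates of `a` and `a⁻¹`. -/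
def IsProdConj {G : Type*} [Group G] (H : Subgroup G) (a x : G) (m : ℕ) : Prop :=
  ∃ f : Fin m → G, (∀ k, ∃ h ∈ H, f k = h⁻¹ * a * h ∨ f k = h⁻¹ * a⁻¹ * h) ∧
    x = (List.ofFn f).prod

lemma rel_exchange {R : Type*} [Ring R] (hR : IsExchangeRing R) (f a : R)
    (hf : f * f = f) (hfa : f * a = a) :
    ∃ g r s : R, g * g = g ∧ f * g = g ∧ g * f = g ∧ g = a * r ∧ f - g = (f - a) * s := by
  obtain ⟨e, r, s, he, her, hes⟩ := hR (a + 1 - f)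
  have hx : (1 : R) - (a + 1 - f) = f - a := by noncomm_ring
  rw [hx] at hes
  have hfh : f * (1 - e) = 1 - e := by
    rw [hes, ← mul_assoc, mul_sub, hf, hfa]
  have hfe : f * e = f - 1 + e := by
    have h : f * (1 - e) = f - f * e := by noncomm_ring
    rw [h] at hfh
    linear_combination (norm := noncomm_ring) -hfh
  have hfef : f * (e * f) = e * f := by
    rw [← mul_assoc, hfe, add_mul, sub_mul, hf, one_mul]
    noncomm_ring
  refine ⟨e * f, r * f, s * f, ?_, hfef, by rw [mul_assoc, hf], ?_, ?_⟩
  · -- idempotent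
    calc e * f * (e * f) = e * (f * (e * f)) := by noncomm_ring
      _ = e * (e * f) := by rw [hfef]
      _ = e * e * f := by noncomm_ring
      _ = e * f := by rw [he]
  · -- e * f = a * (r * f)
    have h2 : f * (a + 1 - f) = a := by
      rw [mul_sub, mul_add, hfa, hf, mul_one]; noncomm_ring
    calc e * f = f * (e * f) := hfef.symm
      _ = f * ((a + 1 - f) * r * f) := by rw [her]
      _ = (f * (a + 1 - f)) * (r * f) := by noncomm_ring
      _ = a * (r * f) := by rw [h2]
  · -- f - e*f = (f-a) * (s*f)
    calc f - e * f = (1 - e) * f := by noncomm_ring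
      _ = ((f - a) * s) * f := by rw [hes]
      _ = (f - a) * (s * f) := by rw [mul_assoc]

lemma main_orth {R : Type*} [Ring R] (hR : IsExchangeRing R) :
    ∀ (m : ℕ) (f : R), f * f = f → ∀ y : Fin m → R,
      (∀ i, f * y i = y i) → (∀ i, y i * f = y i) → (∑ i, y i) = f →
      ∃ e : Fin m → R, (∀ i, e i * e i = e i) ∧ (∀ i j, i ≠ j → e i * e j = 0) ∧
        (∀ i, ∃ r, e i = y i * r) ∧ (∀ i, f * e i = e i) ∧ (∀ i, e i * f = e i) ∧
        ∑ i, e i = f := by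
  intro m
  induction m with
  | zero =>
    intro f hf y hfy hyf hsum
    refine ⟨fun _ => 0, fun i => i.elim0, fun i => i.elim0, fun i => i.elim0,
      fun i => i.elim0, fun i => i.elim0, ?_⟩
    simpa using hsum
  | succ m ih =>
    intro f hf y hfy hyf hsum
    obtain ⟨p, r, s, hp, hfp, hpf, hpr, hps⟩ := rel_exchange hR f (y 0) hf (hfy 0)
    set q := f - p with hq
    have hqq : q * q = q := by
      rw [hq, sub_mul, mul_sub, mul_sub, hf, hp, hfp, hpf]; noncomm_ring
    have hfq : f * q = q := by rw [hq, mul_sub, hf, hfp]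
    have hqf : q * f = q := by rw [hq, sub_mul, hf, hpf]
    have hpq : p * q = 0 := by rw [hq, mul_sub, hpf, hp, sub_self]
    have hqp : q * p = 0 := by rw [hq, sub_mul, hfp, hp, sub_self]
    have hfa : f - y 0 = ∑ i : Fin m, y i.succ := by
      rw [← hsum, Fin.sum_univ_succ]; noncomm_ring
    set z : Fin m → R := fun i => q * (y i.succ * (s * q)) with hz
    have hqz : ∀ i, q * z i = z i := by
      intro i; rw [hz]; dsimp only; rw [← mul_assoc, hqq]
    have hzq : ∀ i, z i * q = z i := by
      intro i; rw [hz]; dsimp only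
      rw [mul_assoc q, mul_assoc (y i.succ), mul_assoc s, hqq]
    have hzsum : ∑ i, z i = q := by
      rw [hz]
      dsimp only
      rw [← Finset.mul_sum, ← Finset.sum_mul, ← hfa]
      have h1 : (f - y 0) * (s * q) = q := by
        rw [← mul_assoc, ← hps, hqq]
      rw [h1, hqq]
    obtain ⟨g, hgi, hgo, hgm, hqg, hgq, hgsum⟩ := ih q hqq z hqz hzq hzsum
    choose c hc using hgm
    -- B i, A i, d i, t
    set A : Fin m → R := fun i => y i.succ * (s * q * c i) with hA
    have hgA : ∀ i, g i = q * A i := by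
      intro i
      rw [hc i, hz, hA]; dsimp only
      rw [mul_assoc, mul_assoc, mul_assoc]
    set d : Fin m → R := fun i => A i * g i with hd
    set t : R := ∑ j, p * d j with ht
    have hgp : ∀ i, g i * p = 0 := by
      intro i; rw [← hgq i, mul_assoc, hqp, mul_zero]
    have hpg : ∀ i, p * g i = 0 := by
      intro i; rw [← hqg i, ← mul_assoc, hpq, zero_mul]
    have hfg : ∀ i, f * g i = g i := by
      intro i; rw [← hqg i, ← mul_assoc, hfq]
    have hgf : ∀ i, g i * f = g i := by
      intro i; rw [← hgq i, mul_assoc, hqf]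
    have hdg : ∀ i, d i * g i = d i := by
      intro i; rw [hd]; dsimp only; rw [mul_assoc, hgi]
    have hdgo : ∀ i j, i ≠ j → d i * g j = 0 := by
      intro i j hij; rw [hd]; dsimp only; rw [mul_assoc, hgo i j hij, mul_zero]
    have hdp : ∀ i, d i * p = 0 := by
      intro i; rw [hd]; dsimp only; rw [mul_assoc, hgp, mul_zero]
    have hdf : ∀ i, d i * f = d i := by
      intro i; rw [hd]; dsimp only; rw [mul_assoc, hgf]
    have hgt : ∀ i, g i * t = 0 := by
      intro i; rw [ht, Finset.mul_sum]
      refine Finset.sum_eq_zero fun j _ => ?_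
      rw [← mul_assoc, hgp, zero_mul]
    have hdt : ∀ i, d i * t = 0 := by
      intro i; rw [ht, Finset.mul_sum]
      refine Finset.sum_eq_zero fun j _ => ?_
      rw [← mul_assoc, hdp, zero_mul]
    have htg : ∀ i, t * g i = p * d i := by
      intro i; rw [ht, Finset.sum_mul]
      rw [Finset.sum_eq_single i]
      · rw [mul_assoc, hdg]
      · intro j _ hji; rw [mul_assoc, hdgo j i hji, mul_zero]
      · intro h; exact absurd (Finset.mem_univ i) h
    have hpt : p * t = t := by
      rw [ht, Finset.mul_sum]
      refine Finset.sum_congr rfl fun j _ => ?_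
      rw [← mul_assoc, hp]
    have htp : t * p = 0 := by
      rw [ht, Finset.sum_mul]
      refine Finset.sum_eq_zero fun j _ => ?_
      rw [mul_assoc, hdp, mul_zero]
    have htt : t * t = 0 := by
      rw [ht, Finset.sum_mul]
      refine Finset.sum_eq_zero fun j _ => ?_
      rw [mul_assoc]
      have : d j * t = 0 := hdt j
      rw [ht] at this
      rw [this, mul_zero]
    have hft : f * t = t := by
      rw [ht, Finset.mul_sum]
      refine Finset.sum_congr rfl fun j _ => ?_
      rw [← mul_assoc, hfp]
    have htf : t * f = t := by
      rw [ht, Finset.sum_mul]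
      refine Finset.sum_congr rfl fun j _ => ?_
      rw [mul_assoc, hdf]
    have hpqf : p + q = f := by rw [hq]; noncomm_ring
    have hfA : ∀ i, f * A i = A i := by
      intro i; rw [hA]; dsimp only; rw [← mul_assoc, hfy]
    have hqd : ∀ i, q * d i = g i := by
      intro i; rw [hd]; dsimp only; rw [← mul_assoc, ← hgA i, hgi]
    have hed : ∀ i, g i + p * d i = d i := by
      intro i
      have h1 : f * d i = d i := by
        rw [hd]; dsimp only; rw [← mul_assoc, hfA]
      calc g i + p * d i = q * d i + p * d i := by rw [hqd]
        _ = (p + q) * d i := by noncomm_ring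
        _ = f * d i := by rw [hpqf]
        _ = d i := h1
    -- the new idempotents
    refine ⟨Fin.cases (p - t) (fun i => g i + p * d i), ?_, ?_, ?_, ?_, ?_, ?_⟩
    · -- idempotents
      intro i
      refine Fin.cases ?_ ?_ i
      · simp only [Fin.cases_zero]
        rw [sub_mul, mul_sub, mul_sub, hp, hpt, htp, htt]
        noncomm_ring
      · intro i
        simp only [Fin.cases_succ]
        have h1 : g i * (p * d i) = 0 := by rw [← mul_assoc, hgp, zero_mul]
        have h2 : p * d i * (g i) = p * d i := by rw [mul_assoc, hdg]
        have h3 : p * d i * (p * d i) = 0 := by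
          rw [mul_assoc, ← mul_assoc (d i), hdp, zero_mul, mul_zero]
        calc (g i + p * d i) * (g i + p * d i)
            = g i * g i + g i * (p * d i) + (p * d i * g i + p * d i * (p * d i)) := by
              noncomm_ring
          _ = g i + p * d i := by rw [hgi, h1, h2, h3]; simp
    · -- orthogonal
      intro i j hij
      rcases Fin.eq_zero_or_eq_succ i with rfl | ⟨i', rfl⟩ <;>
        rcases Fin.eq_zero_or_eq_succ j with rfl | ⟨j', rfl⟩
      · exact absurd rfl hij
      · simp only [Fin.cases_zero, Fin.cases_succ]
        have h1 : p * g j' = 0 := hpg j'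
        have h2 : (p - t) * (p * d j') = p * d j' := by
          rw [← mul_assoc, sub_mul, hp, htp, sub_zero]
        calc (p - t) * (g j' + p * d j')
            = (p - t) * g j' + (p - t) * (p * d j') := by noncomm_ring
          _ = (p * g j' - t * g j') + p * d j' := by rw [h2, sub_mul]
          _ = 0 := by rw [h1, htg, zero_sub, neg_add_cancel]
      · simp only [Fin.cases_zero, Fin.cases_succ]
        have h1 : g i' * (p - t) = 0 := by rw [mul_sub, hgp, hgt, sub_zero]
        have h2 : d i' * (p - t) = 0 := by rw [mul_sub, hdp, hdt, sub_zero]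
        calc (g i' + p * d i') * (p - t)
            = g i' * (p - t) + p * (d i' * (p - t)) := by noncomm_ring
          _ = 0 := by rw [h1, h2, mul_zero, add_zero]
      · simp only [Fin.cases_succ]
        have hij' : i' ≠ j' := fun h => hij (by rw [h])
        have h1 : g i' * g j' = 0 := hgo i' j' hij'
        have h2 : g i' * (p * d j') = 0 := by rw [← mul_assoc, hgp, zero_mul]
        have h3 : d i' * g j' = 0 := hdgo i' j' hij'
        have h4 : d i' * (p * d j') = 0 := by rw [← mul_assoc, hdp, zero_mul]
        calc (g i' + p * d i') * (g j' + p * d j')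
            = g i' * g j' + g i' * (p * d j')
              + (p * (d i' * g j') + p * (d i' * (p * d j'))) := by noncomm_ring
          _ = 0 := by rw [h1, h2, h3, h4]; simp
    · -- membership
      intro i
      refine Fin.cases ?_ ?_ i
      · simp only [Fin.cases_zero]
        refine ⟨r * (1 - ∑ j, d j), ?_⟩
        rw [← mul_assoc, ← hpr, mul_sub, mul_one, Finset.mul_sum, ← ht]
      · intro i
        simp only [Fin.cases_succ]
        refine ⟨s * q * c i * g i, ?_⟩
        rw [hed i, hd]; dsimp only
        rw [hA]; dsimp only
        rw [mul_assoc]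
    · -- f * e = e
      intro i
      refine Fin.cases ?_ ?_ i
      · simp only [Fin.cases_zero]
        rw [mul_sub, hfp, hft]
      · intro i
        simp only [Fin.cases_succ]
        rw [mul_add, hfg, ← mul_assoc, hfp]
    · -- e * f = e
      intro i
      refine Fin.cases ?_ ?_ i
      · simp only [Fin.cases_zero]
        rw [sub_mul, hpf, htf]
      · intro i
        simp only [Fin.cases_succ]
        rw [add_mul, hgf, mul_assoc, hdf]
    · -- sum
      rw [Fin.sum_univ_succ]
      simp only [Fin.cases_zero, Fin.cases_succ]
      have ht' : t = p * ∑ j, d j := by rw [ht, Finset.mul_sum]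
      rw [Finset.sum_add_distrib, hgsum, ← Finset.mul_sum, ← ht']
      calc p - t + (q + t) = p + q := by abel
        _ = f := hpqf

theorem exchange_orthogonal_idempotents (R : Type*) [Ring R] (hR : IsExchangeRing R)
    (m : ℕ) (hm : 0 < m) (x : Fin m → R) (hx : ∑ i, x i = 1) :
    ∃ e : Fin m → R, (∀ i, e i * e i = e i) ∧ (∀ i j, i ≠ j → e i * e j = 0) ∧
      (∀ i, ∃ r : R, e i = x i * r) ∧ ∑ i, e i = 1 := by
  obtain ⟨e, h1, h2, h3, _, _, h6⟩ :=
    main_orth hR m 1 (one_mul 1) x (fun i => one_mul _) (fun i => mul_one _) hx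
  exact ⟨e, h1, h2, h3, h6⟩
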